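/- arXiv:1403.1951 — 3 statements merged into one kernel-verified Lean document; each statement's English description precedes it below -/
import Mathlib

section
/- Let λ ∈ ℤⁿ ∖ {0} have coprime coefficients. Then the polynomial X^{λ⁺} − X^{λ⁻} is irreducible in ℤ[X₁,…,Xₙ]. -/
open scoped BigOperators

namespace WordEquations

/-- The set of letters occurring in the images of a (letter-image) morphism. -/
def alph {Ξ Δ : Type*} (h : Ξ → List Δ) : Set Δ := ⋃ x, {a | a ∈ h x}

/-- `h` is a solution of the system `T` of word equations. -/
def IsSolution {Ξ A : Type*} (h : Ξ → List A) (T : Set (List Ξ × List Ξ)) : Prop :=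
  ∀ e ∈ T, e.1.flatMap h = e.2.flatMap h

/-- `h` is a solution of the single word equation `E`. -/
def IsSolutionE {Ξ A : Type*} (h : Ξ → List A) (E : List Ξ × List Ξ) : Prop :=
  E.1.flatMap h = E.2.flatMap h

/-- `θ` is a renaming of letters on the set `S`: it maps each letter of `S` to a
single letter, injectively on `S`. -/
def IsRenamingOn {A B : Type*} (θ : A → List B) (S : Set A) : Prop :=
  (∀ a ∈ S, ∃ b, θ a = [b]) ∧ ∀ a₁ ∈ S, ∀ a₂ ∈ S, θ a₁ = θ a₂ → a₁ = a₂

/-- `g` is a principal solution of `T`: whenever `g = θ ∘ g'` for a solution `g'`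
(and a morphism `θ` non-erasing on `alph g'`), `θ` is a renaming of letters. -/
def IsPrincipalSolution {Ξ Δ : Type*} (g : Ξ → List Δ) (T : Set (List Ξ × List Ξ)) : Prop :=
  IsSolution g T ∧
  ∀ (Δ' : Type) (g' : Ξ → List Δ') (θ : Δ' → List Δ),
    IsSolution g' T → (∀ a ∈ alph g', θ a ≠ []) →
    (∀ x, g x = (g' x).flatMap θ) → IsRenamingOn θ (alph g')

/-- The vector `γ(h)_a = (|h(x₁)|_a, …, |h(xₙ)|_a) ∈ ℚⁿ`. -/
def gamVec {n : ℕ} {Δ : Type*} [DecidableEq Δ] (h : Fin n → List Δ) (a : Δ) :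
    Fin n → ℚ := fun j => ((h j).count a : ℚ)

/-- `Γ_h`, the ℚ-span of the vectors `γ(h)_a`. -/
noncomputable def GammaSpace {n : ℕ} {Δ : Type*} [DecidableEq Δ] (h : Fin n → List Δ) :
    Submodule ℚ (Fin n → ℚ) := Submodule.span ℚ (Set.range (gamVec h))

/-- The rank of a morphism: `dim Γ_h`. -/
noncomputable def morphRank {n : ℕ} {Δ : Type*} [DecidableEq Δ] (h : Fin n → List Δ) : ℕ :=
  Module.finrank ℚ ↥(GammaSpace h)

/-- `Mℕ`: all finite nonempty sums `Σᵢ aᵢ αᵢ` with `aᵢ` positive integers and `αᵢ ∈ M`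
(equivalently, nonempty finite sums of elements of `M` with repetitions). -/
def natSums {n : ℕ} (M : Set (Fin n → ℚ)) : Set (Fin n → ℚ) :=
  {v | ∃ l : List (Fin n → ℚ), l ≠ [] ∧ (∀ x ∈ l, x ∈ M) ∧ l.sum = v}

/-- `M ⊆ ℚⁿ` has rank `r`: the ℚ-span of `M` has dimension `r`, and `M` is not contained
in any finite union of `(r-1)`-dimensional subspaces of its span. -/
def HasRank {n : ℕ} (M : Set (Fin n → ℚ)) (r : ℕ) : Prop :=
  Module.finrank ℚ ↥(Submodule.span ℚ M) = r ∧
  ∀ V : Finset (Submodule ℚ (Fin n → ℚ)),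
    (∀ W ∈ V, W ≤ Submodule.span ℚ M ∧ Module.finrank ℚ ↥W + 1 = r) →
    ¬ M ⊆ ⋃ W ∈ V, (W : Set (Fin n → ℚ))

/-- The monomial `X^α = ∏ᵢ Xᵢ^{αᵢ}` in `ℤ[X₁,…,Xₙ]`. -/
noncomputable def Xpow {n : ℕ} (α : Fin n → ℕ) : MvPolynomial (Fin n) ℤ :=
  ∏ i, MvPolynomial.X i ^ α i

/-- The polynomial `Σ_{a : w_a = j} ∏_{t<a} X_{w_t}` associated with one side of an equation. -/
noncomputable def sideS {n : ℕ} (w : List (Fin n)) (j : Fin n) : MvPolynomial (Fin n) ℤ :=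
  ∑ a : Fin w.length, if w.get a = j then ((w.take (a : ℕ)).map MvPolynomial.X).prod else 0

/-- The polynomial `S_{E,x_j}` of the equation `E = (u,v)`. -/
noncomputable def SE {n : ℕ} (E : List (Fin n) × List (Fin n)) (j : Fin n) :
    MvPolynomial (Fin n) ℤ :=
  sideS E.1 j - sideS E.2 j

/-- Evaluation `p ↦ p(β)`, induced by `Xᵢ ↦ x^{βᵢ}`. -/
noncomputable def evalAt {n : ℕ} (β : Fin n → ℕ) (p : MvPolynomial (Fin n) ℤ) : Polynomial ℤ :=
  MvPolynomial.eval₂ (Int.castRingHom (Polynomial ℤ)) (fun i => Polynomial.X ^ β i) p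

/-- `λ⁺`, the positive part of an integer vector. -/
def lamPos {n : ℕ} (lam : Fin n → ℤ) : Fin n → ℕ := fun i => (lam i).toNat

/-- `λ⁻`, the negative part of an integer vector. -/
def lamNeg {n : ℕ} (lam : Fin n → ℤ) : Fin n → ℕ := fun i => (-(lam i)).toNat

/-- The length type `L(θ_α ∘ h)` of the composition of `h` with the power morphism
`θ_α : aᵢ ↦ aᵢ^{αᵢ}`. -/
def powLenType {n k : ℕ} (α : Fin k → ℕ) (h : Fin n → List (Fin k)) : Fin n → ℕ :=
  fun x => ∑ a, α a * (h x).count a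

/-- The field `ℚ(x)`, realized as the field of fractions of `ℤ[x]`. -/
noncomputable abbrev RatX : Type := FractionRing (Polynomial ℤ)

/-- The vector `𝒮_E(β) ∈ ℚ(x)ⁿ`. -/
noncomputable def SEvec {n : ℕ} (E : List (Fin n) × List (Fin n)) (β : Fin n → ℕ) :
    Fin n → RatX :=
  fun j => algebraMap (Polynomial ℤ) RatX (evalAt β (SE E j))

/-- The set of exponents of the minimal monomials of `p` (exponents in the support of `p`
that are minimal with respect to the componentwise order). -/
noncomputable def minimalSupport {n : ℕ} (p : MvPolynomial (Fin n) ℤ) : Finset (Fin n →₀ ℕ) :=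
  p.support.filter (fun β => ∀ β' ∈ p.support, β' ≤ β → β' = β)



section Statement10Aux

open AddMonoidAlgebra Finsupp

variable {n : ℕ}

/-- The Laurent (group) algebra `ℤ[ℤⁿ]`. -/
abbrev GA (n : ℕ) := AddMonoidAlgebra ℤ (Fin n → ℤ)

/-- Inclusion of exponents `ℕⁿ → ℤⁿ` as an additive hom. -/
noncomputable def expHom (n : ℕ) : (Fin n →₀ ℕ) →+ (Fin n → ℤ) where
  toFun d := fun i => (d i : ℤ)
  map_zero' := by ext i; simp
  map_add' a b := by ext i; push_cast; simp

lemma expHom_injective : Function.Injective (expHom n) := by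
  intro a b h
  ext i
  have : ((a i : ℤ)) = (b i : ℤ) := congrFun h i
  exact_mod_cast this

/-- The canonical embedding `ℤ[X₁,…,Xₙ] → ℤ[ℤⁿ]`. -/
noncomputable def phiR (n : ℕ) : MvPolynomial (Fin n) ℤ →+* GA n :=
  AddMonoidAlgebra.mapDomainRingHom ℤ (expHom n)

lemma phiR_apply (p : MvPolynomial (Fin n) ℤ) :
    phiR n p = AddMonoidAlgebra.mapDomain (expHom n) p := rfl

lemma phiR_monomial (d : Fin n →₀ ℕ) (c : ℤ) :
    phiR n (MvPolynomial.monomial d c) = AddMonoidAlgebra.single (expHom n d) c := by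
  rw [← MvPolynomial.single_eq_monomial, phiR_apply]
  exact AddMonoidAlgebra.mapDomain_single

lemma phiR_injective : Function.Injective (phiR n) :=
  AddMonoidAlgebra.mapDomain_injective expHom_injective

lemma GA.single_unit (g : Fin n → ℤ) : IsUnit (AddMonoidAlgebra.single g (1:ℤ) : GA n) := by
  refine isUnit_iff_exists.2 ⟨AddMonoidAlgebra.single (-g) 1, ?_, ?_⟩ <;>
    rw [AddMonoidAlgebra.single_mul_single] <;> simp [AddMonoidAlgebra.one_def]

/-- Geometric series divisibility in `ℤ[ℤⁿ]`. -/
lemma GA.sub_one_dvd (lam : Fin n → ℤ) (k : ℤ) :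
    (AddMonoidAlgebra.single lam (1:ℤ) - 1 : GA n) ∣
      AddMonoidAlgebra.single (k • lam) (1:ℤ) - 1 := by
  set D : GA n := AddMonoidAlgebra.single lam 1 - 1 with hD
  have hnat : ∀ m : ℕ, D ∣ AddMonoidAlgebra.single ((m : ℤ) • lam) (1:ℤ) - 1 := by
    intro m
    induction m with
    | zero => simp [AddMonoidAlgebra.one_def]
    | succ m ih =>
      have key : AddMonoidAlgebra.single (((m : ℤ) + 1) • lam) (1:ℤ) - 1
          = AddMonoidAlgebra.single ((m : ℤ) • lam) 1 * D
            + (AddMonoidAlgebra.single ((m : ℤ) • lam) 1 - 1) := by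
        rw [hD, mul_sub, AddMonoidAlgebra.single_mul_single, mul_one, add_smul, one_smul]
        ring
      push_cast
      rw [key]
      exact dvd_add (Dvd.intro_left _ rfl) ih
  rcases le_or_gt 0 k with hk | hk
  · have : k = ((k.toNat : ℤ)) := (Int.toNat_of_nonneg hk).symm
    rw [this]; exact hnat _
  · have hk' : -k = (((-k).toNat : ℤ)) := (Int.toNat_of_nonneg (by omega)).symm
    have h := hnat (-k).toNat
    rw [← hk'] at h
    have key : AddMonoidAlgebra.single (k • lam) (1:ℤ) - 1
        = -(AddMonoidAlgebra.single (k • lam) 1 *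
            (AddMonoidAlgebra.single ((-k) • lam) 1 - 1)) := by
      rw [mul_sub, AddMonoidAlgebra.single_mul_single, mul_one]
      have : k • lam + (-k) • lam = 0 := by rw [← add_smul]; simp
      rw [this, ← AddMonoidAlgebra.one_def]
      ring
    rw [key]
    exact Dvd.dvd.neg_right (Dvd.dvd.mul_left h _)

/-- Projection of `ℤⁿ` along `lam`, given a Bezout cofactor `c`. -/
def projHom (lam c : Fin n → ℤ) : (Fin n → ℤ) →+ (Fin n → ℤ) where
  toFun x := x - (∑ i, c i * x i) • lam
  map_zero' := by simp
  map_add' x y := by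
    simp only [Pi.add_apply, mul_add, Finset.sum_add_distrib, add_smul]
    abel

noncomputable def PiHom (lam c : Fin n → ℤ) : GA n →+* GA n :=
  AddMonoidAlgebra.mapDomainRingHom ℤ (projHom lam c)

lemma PiHom_single (lam c : Fin n → ℤ) (g : Fin n → ℤ) (z : ℤ) :
    PiHom lam c (AddMonoidAlgebra.single g z) =
      AddMonoidAlgebra.single (projHom lam c g) z :=
  AddMonoidAlgebra.mapDomain_single

lemma dvd_sub_PiHom (lam c : Fin n → ℤ) (a : GA n) :
    (AddMonoidAlgebra.single lam (1:ℤ) - 1 : GA n) ∣ a - PiHom lam c a := by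
  induction a using AddMonoidAlgebra.induction with
  | zero => simp
  | single_add g z f _ _ ih =>
    have key : ∀ u v w x : GA n, u + v - (w + x) = (u - w) + (v - x) := fun _ _ _ _ => by ring
    rw [map_add, PiHom_single, key]
    refine dvd_add ?_ ih
    have hg : (AddMonoidAlgebra.single g z : GA n)
        = AddMonoidAlgebra.single (projHom lam c g) z *
            AddMonoidAlgebra.single ((∑ i, c i * g i) • lam) 1 := by
      rw [AddMonoidAlgebra.single_mul_single, mul_one]
      congr 1
      show g = g - (∑ i, c i * g i) • lam + (∑ i, c i * g i) • lam
      abel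
    have h2 : (AddMonoidAlgebra.single g z : GA n)
          - AddMonoidAlgebra.single (projHom lam c g) z
        = AddMonoidAlgebra.single (projHom lam c g) z *
            (AddMonoidAlgebra.single ((∑ i, c i * g i) • lam) 1 - 1) := by
      rw [mul_sub, ← hg, mul_one]
    rw [h2]
    exact Dvd.dvd.mul_left (GA.sub_one_dvd lam _) _

/-- The key primality: `X^λ - 1` is prime in `ℤ[ℤⁿ]` for `λ` with a Bezout cofactor. -/
lemma GA.prime_D (lam : Fin n → ℤ) (hlam : lam ≠ 0) (c : Fin n → ℤ)
    (hc : ∑ i, c i * lam i = 1) :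
    Prime (AddMonoidAlgebra.single lam (1:ℤ) - 1 : GA n) := by
  set D : GA n := AddMonoidAlgebra.single lam 1 - 1 with hD
  have hproj : projHom lam c lam = 0 := by
    show lam - (∑ i, c i * lam i) • lam = 0
    rw [hc, one_smul, sub_self]
  have hPiD : PiHom lam c D = 0 := by
    rw [hD, map_sub, map_one, PiHom_single, hproj, ← AddMonoidAlgebra.one_def, sub_self]
  have hdvd_iff : ∀ a : GA n, D ∣ a ↔ PiHom lam c a = 0 := by
    intro a
    constructor
    · rintro ⟨t, rfl⟩; rw [map_mul, hPiD, zero_mul]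
    · intro h
      have := dvd_sub_PiHom lam c a
      rwa [h, sub_zero] at this
  constructor
  · intro h
    have : (AddMonoidAlgebra.single lam (1:ℤ) : GA n).coeff lam - (1 : GA n).coeff lam = 0 := by
      rw [← Finsupp.sub_apply, ← AddMonoidAlgebra.coeff_sub, ← hD, h]; rfl
    rw [AddMonoidAlgebra.coeff_single, Finsupp.single_eq_same, AddMonoidAlgebra.one_def,
      AddMonoidAlgebra.coeff_single, Finsupp.single_eq_of_ne'] at this
    · norm_num at this
    · exact fun h0 => hlam h0.symm
  constructor
  · intro h
    have := h.map (PiHom lam c)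
    rw [hPiD] at this
    exact not_isUnit_zero this
  · intro x y hxy
    rw [hdvd_iff] at hxy
    rw [map_mul] at hxy
    rcases mul_eq_zero.1 hxy with h | h
    · exact Or.inl ((hdvd_iff x).2 h)
    · exact Or.inr ((hdvd_iff y).2 h)

/-- Clearing denominators: every element of `ℤ[ℤⁿ]` becomes polynomial after
multiplying by a monomial. -/
lemma GA.clear (x : GA n) :
    ∃ (d : Fin n →₀ ℕ) (r : MvPolynomial (Fin n) ℤ),
      x * AddMonoidAlgebra.single (expHom n d) 1 = phiR n r := by
  induction x using AddMonoidAlgebra.induction with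
  | zero => exact ⟨0, 0, by simp⟩
  | single_add g z f _ _ ih =>
    obtain ⟨d₂, r₂, h₂⟩ := ih
    set d₁ : Fin n →₀ ℕ := Finsupp.equivFunOnFinite.symm (fun i => (-(g i)).toNat) with hd₁
    set d₀ : Fin n →₀ ℕ := Finsupp.equivFunOnFinite.symm (fun i => (g i).toNat) with hd₀
    have hge : g + expHom n d₁ = expHom n d₀ := by
      funext i
      show g i + ((d₁ i : ℤ)) = (d₀ i : ℤ)
      simp only [hd₁, hd₀, Finsupp.coe_equivFunOnFinite_symm]
      omega
    refine ⟨d₁ + d₂, MvPolynomial.monomial (d₀ + d₂) z + r₂ * MvPolynomial.monomial d₁ 1, ?_⟩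
    have ed : expHom n (d₁ + d₂) = expHom n d₁ + expHom n d₂ := map_add _ _ _
    have ed0 : expHom n (d₀ + d₂) = expHom n d₀ + expHom n d₂ := map_add _ _ _
    rw [map_add (phiR n), phiR_monomial, map_mul, phiR_monomial, ed, ed0, add_mul]
    congr 1
    · rw [AddMonoidAlgebra.single_mul_single, mul_one, ← add_assoc, hge]
    · rw [← h₂,
        show AddMonoidAlgebra.single (expHom n d₁ + expHom n d₂) (1:ℤ)
            = AddMonoidAlgebra.single (expHom n d₂) 1 * AddMonoidAlgebra.single (expHom n d₁) 1
          from by rw [AddMonoidAlgebra.single_mul_single, mul_one, add_comm],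
        ← mul_assoc]

/-- `X i` is prime in `ℤ[X₁,…,Xₙ]`. -/
lemma MvPoly.prime_X (i : Fin n) : Prime (MvPolynomial.X i : MvPolynomial (Fin n) ℤ) := by
  classical
  set ε : MvPolynomial (Fin n) ℤ →+* MvPolynomial (Fin n) ℤ :=
    (MvPolynomial.aeval (Function.update MvPolynomial.X i 0)).toRingHom with hε
  have hεX : ε (MvPolynomial.X i) = 0 := by
    simp [hε, MvPolynomial.aeval_X]
  have hdvd : ∀ p : MvPolynomial (Fin n) ℤ, MvPolynomial.X i ∣ p - ε p := by
    intro p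
    induction p using MvPolynomial.induction_on' with
    | monomial d c =>
      by_cases hdi : d i = 0
      · have : ε (MvPolynomial.monomial d c) = MvPolynomial.monomial d c := by
          rw [hε]
          simp only [AlgHom.toRingHom_eq_coe, RingHom.coe_coe, MvPolynomial.aeval_monomial]
          rw [MvPolynomial.monomial_eq]
          congr 1
          apply Finsupp.prod_congr
          intro j hj
          have hji : j ≠ i := by
            intro h
            exact (Finsupp.mem_support_iff.1 hj) (h ▸ hdi)
          rw [Function.update_of_ne hji]
        rw [this, sub_self]
        exact dvd_zero _
      · have : ε (MvPolynomial.monomial d c) = 0 := by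
          rw [hε]
          simp only [AlgHom.toRingHom_eq_coe, RingHom.coe_coe, MvPolynomial.aeval_monomial]
          have : (Finsupp.prod d fun j k => Function.update MvPolynomial.X i
              (0 : MvPolynomial (Fin n) ℤ) j ^ k) = 0 := by
            apply Finset.prod_eq_zero (Finsupp.mem_support_iff.2 hdi)
            show Function.update MvPolynomial.X i (0 : MvPolynomial (Fin n) ℤ) i ^ d i = 0
            rw [Function.update_self]
            exact zero_pow hdi
          rw [this, mul_zero]
        rw [this, sub_zero]
        rw [MvPolynomial.X_dvd_monomial]
        exact Or.inr hdi
    | add p q hp hq =>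
      have : p + q - ε (p + q) = (p - ε p) + (q - ε q) := by rw [map_add]; ring
      rw [this]
      exact dvd_add hp hq
  have hiff : ∀ p : MvPolynomial (Fin n) ℤ, MvPolynomial.X i ∣ p ↔ ε p = 0 := by
    intro p
    constructor
    · rintro ⟨t, rfl⟩; rw [map_mul, hεX, zero_mul]
    · intro h; have := hdvd p; rwa [h, sub_zero] at this
  refine ⟨MvPolynomial.X_ne_zero i, ?_, ?_⟩
  · intro h
    have := h.map ε
    rw [hεX] at this
    exact not_isUnit_zero this
  · intro x y hxy
    rw [hiff, map_mul] at hxy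
    rcases mul_eq_zero.1 hxy with h | h
    · exact Or.inl ((hiff x).2 h)
    · exact Or.inr ((hiff y).2 h)

lemma bezout (lam : Fin n → ℤ) (hcop : Finset.univ.gcd lam = 1) :
    ∃ c : Fin n → ℤ, ∑ i, c i * lam i = 1 := by
  have h1 : (1 : ℤ) ∈ Ideal.span (Set.range lam) := by
    set I := Ideal.span (Set.range lam) with hI
    have hgen : Ideal.span {Submodule.IsPrincipal.generator I} = I :=
      Ideal.span_singleton_generator I
    have hgd : ∀ i, Submodule.IsPrincipal.generator I ∣ lam i := by
      intro i
      rw [← Ideal.mem_span_singleton, hgen]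
      exact Ideal.subset_span ⟨i, rfl⟩
    have hg1 : Submodule.IsPrincipal.generator I ∣ 1 :=
      hcop ▸ Finset.dvd_gcd (fun i _ => hgd i)
    rw [← hgen]
    exact Ideal.mem_span_singleton.2 hg1
  exact Ideal.mem_span_range_iff_exists_fun.1 h1

lemma strip_monomials (f : MvPolynomial (Fin n) ℤ) (hX : ∀ i, ¬ (MvPolynomial.X i ∣ f))
    (m : Fin n →₀ ℕ) :
    ∀ a r : MvPolynomial (Fin n) ℤ, a * MvPolynomial.monomial m 1 = f * r → f ∣ a := by
  induction m using Finsupp.induction with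
  | zero =>
    intro a r h
    rw [MvPolynomial.monomial_zero', map_one, mul_one] at h
    exact ⟨r, h⟩
  | single_add g k m' hgm' hk ih =>
    have key : ∀ b : ℕ, ∀ a r : MvPolynomial (Fin n) ℤ,
        a * (MvPolynomial.X g ^ b * MvPolynomial.monomial m' 1) = f * r → f ∣ a := by
      intro b
      induction b with
      | zero => intro a r h; rw [pow_zero, one_mul] at h; exact ih a r h
      | succ b ihb =>
        intro a r h
        have hdvd : MvPolynomial.X g ∣ f * r :=
          ⟨a * (MvPolynomial.X g ^ b * MvPolynomial.monomial m' 1), by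
            rw [← h]; ring⟩
        rcases (MvPoly.prime_X g).2.2 f r hdvd with hf | hr
        · exact absurd hf (hX g)
        · obtain ⟨r', rfl⟩ := hr
          have h2 : MvPolynomial.X g * (a * (MvPolynomial.X g ^ b * MvPolynomial.monomial m' 1))
              = MvPolynomial.X g * (f * r') := by linear_combination h
          exact ihb a r' (mul_left_cancel₀ (MvPolynomial.X_ne_zero g) h2)
    intro a r h
    refine key k a r ?_
    rw [← h]
    congr 1
    rw [MvPolynomial.X_pow_eq_monomial, MvPolynomial.monomial_mul, mul_one]

lemma Xpow_eq_monomial (α : Fin n → ℕ) :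
    Xpow α = MvPolynomial.monomial (Finsupp.equivFunOnFinite.symm α) 1 := by
  set d : Fin n →₀ ℕ := Finsupp.equivFunOnFinite.symm α with hd
  rw [← MvPolynomial.prod_X_pow_eq_monomial, Xpow]
  symm
  apply Finset.prod_subset (Finset.subset_univ _)
  intro i _ hi
  have : d i = 0 := Finsupp.notMem_support_iff.1 hi
  have hα : α i = 0 := this
  rw [show d i = α i from rfl, hα, pow_zero]

end Statement10Aux

/-- for `λ ∈ ℤⁿ ∖ {0}` with coprime coefficients, the polynomial
`X^{λ⁺} - X^{λ⁻}` is irreducible in `ℤ[X₁,…,Xₙ]`. -/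
theorem Xpow_sub_irreducible {n : ℕ} (lam : Fin n → ℤ) (hne : lam ≠ 0)
    (hcop : Finset.univ.gcd lam = 1) :
    Irreducible (Xpow (lamPos lam) - Xpow (lamNeg lam)) := by
  classical
  obtain ⟨c, hc⟩ := bezout lam hcop
  set dp : Fin n →₀ ℕ := Finsupp.equivFunOnFinite.symm (lamPos lam) with hdp
  set dm : Fin n →₀ ℕ := Finsupp.equivFunOnFinite.symm (lamNeg lam) with hdm
  set f : MvPolynomial (Fin n) ℤ := Xpow (lamPos lam) - Xpow (lamNeg lam) with hf
  have hfm : f = MvPolynomial.monomial dp 1 - MvPolynomial.monomial dm 1 := by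
    rw [hf, Xpow_eq_monomial, Xpow_eq_monomial]
  obtain ⟨j, hj⟩ : ∃ j, lam j ≠ 0 := by
    by_contra h
    push_neg at h
    exact hne (funext h)
  have hdpm : dp ≠ dm := by
    intro h
    have := congrArg (fun d : Fin n →₀ ℕ => d j) h
    simp only [hdp, hdm, Finsupp.coe_equivFunOnFinite_symm] at this
    unfold lamPos lamNeg at this
    omega
  -- coefficients of f
  have hcoeff_p : MvPolynomial.coeff dp f = 1 := by
    rw [hfm, MvPolynomial.coeff_sub, MvPolynomial.coeff_monomial, MvPolynomial.coeff_monomial,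
      if_pos rfl, if_neg (fun h => hdpm (h.symm))]
    ring
  have hcoeff_m : MvPolynomial.coeff dm f = -1 := by
    rw [hfm, MvPolynomial.coeff_sub, MvPolynomial.coeff_monomial, MvPolynomial.coeff_monomial,
      if_pos rfl, if_neg (fun h => hdpm h)]
    ring
  -- X i does not divide f
  have hX : ∀ i, ¬ (MvPolynomial.X i ∣ f) := by
    intro i hdvd
    obtain ⟨t, ht⟩ := hdvd
    rcases le_or_gt (lam i) 0 with hle | hlt
    · have hdpi : dp i = 0 := by
        simp only [hdp, Finsupp.coe_equivFunOnFinite_symm]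
        unfold lamPos
        omega
      have : MvPolynomial.coeff dp f = 0 := by
        rw [ht, MvPolynomial.coeff_X_mul']
        rw [if_neg]
        intro hmem
        exact (Finsupp.mem_support_iff.1 hmem) hdpi
      rw [hcoeff_p] at this
      norm_num at this
    · have hdmi : dm i = 0 := by
        simp only [hdm, Finsupp.coe_equivFunOnFinite_symm]
        unfold lamNeg
        omega
      have : MvPolynomial.coeff dm f = 0 := by
        rw [ht, MvPolynomial.coeff_X_mul']
        rw [if_neg]
        intro hmem
        exact (Finsupp.mem_support_iff.1 hmem) hdmi
      rw [hcoeff_m] at this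
      norm_num at this
  -- the image of f in the Laurent algebra
  have hexp : expHom n dp = expHom n dm + lam := by
    funext i
    show ((dp i : ℤ)) = (dm i : ℤ) + lam i
    simp only [hdp, hdm, Finsupp.coe_equivFunOnFinite_symm]
    unfold lamPos lamNeg
    omega
  have hphif : phiR n f = AddMonoidAlgebra.single (expHom n dm) 1 *
      (AddMonoidAlgebra.single lam (1:ℤ) - 1) := by
    rw [hfm, map_sub, phiR_monomial, phiR_monomial, mul_sub, mul_one,
      AddMonoidAlgebra.single_mul_single, mul_one, ← hexp]
  have hDprime : Prime (AddMonoidAlgebra.single lam (1:ℤ) - 1 : GA n) :=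
    GA.prime_D lam hne c hc
  have hassoc : Associated (AddMonoidAlgebra.single lam (1:ℤ) - 1 : GA n) (phiR n f) := by
    obtain ⟨u, hu⟩ := GA.single_unit (n := n) (expHom n dm)
    exact ⟨u, by rw [hu, mul_comm]; exact hphif.symm⟩
  have hphif_prime : Prime (phiR n f) := hassoc.prime hDprime
  -- pull back divisibility along phiR
  have hpull : ∀ a : MvPolynomial (Fin n) ℤ, phiR n f ∣ phiR n a → f ∣ a := by
    intro a ⟨t, ht⟩
    obtain ⟨d, r, hdr⟩ := GA.clear t
    have : phiR n (a * MvPolynomial.monomial d 1) = phiR n (f * r) := by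
      rw [map_mul, map_mul, phiR_monomial, ht, mul_assoc, hdr]
    have heq := phiR_injective this
    exact strip_monomials f hX d a r heq
  have hfprime : Prime f := by
    refine ⟨?_, ?_, ?_⟩
    · intro h
      rw [h, MvPolynomial.coeff_zero] at hcoeff_p
      norm_num at hcoeff_p
    · intro h
      exact hphif_prime.2.1 (h.map (phiR n))
    · intro a b hab
      have : phiR n f ∣ phiR n a * phiR n b := by
        rw [← map_mul]
        exact (phiR n).toMonoidHom.map_dvd hab
      rcases hphif_prime.2.2 _ _ this with h | h
      · exact Or.inl (hpull a h)
      · exact Or.inr (hpull b h)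
  exact hfprime.irreducible

end WordEquations
end

section
/- Let h be an erasing solution of rank n−1 of a word equation E in n unknowns x₁,…,xₙ. Then h(x_k) is the empty word for exactly one index k, the equation δ_k(E) obtained from E by erasing the variable x_k is trivial, and Γ_h = {u ∈ ℚⁿ : u_k = 0}, i.e., Γ_h = 𝒩(e_k)ℚ for the k-th canonical basis vector e_k. -/
open scoped BigOperators

namespace WordEquations

private lemma flatMap_nil_of {n : ℕ} {Δ : Type} (h : Fin n → List Δ)
    (u : List (Fin n)) (hu : ∀ z ∈ u, h z ≠ []) (he : u.flatMap h = []) : u = [] := by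
  cases u with
  | nil => rfl
  | cons z t =>
    rw [List.flatMap_cons, List.append_eq_nil_iff] at he
    exact absurd he.1 (hu z (by simp))

private lemma key_lemma {n : ℕ} {Δ : Type} [DecidableEq Δ] :
    ∀ (N : ℕ) (h : Fin n → List Δ) (u v : List (Fin n)),
      (u.flatMap h).length ≤ N →
      (∀ z ∈ u, h z ≠ []) → (∀ z ∈ v, h z ≠ []) →
      (∀ d : Fin n → ℚ, (∀ a : Δ, ∑ j, d j * (((h j).count a : ℚ)) = 0) →
        ∀ j, h j ≠ [] → d j = 0) →
      u.flatMap h = v.flatMap h → u = v := by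
  intro N
  induction N with
  | zero =>
    intro h u v hlen hu hv _ heq
    have hu0 : u.flatMap h = [] := List.eq_nil_of_length_eq_zero (Nat.le_zero.mp hlen)
    rw [flatMap_nil_of h u hu hu0, flatMap_nil_of h v hv (heq ▸ hu0)]
  | succ N IH =>
    intro h u v hlen hu hv hGood heq
    cases u with
    | nil =>
      rw [flatMap_nil_of h v hv (by simpa using heq.symm)]
    | cons x u₂ =>
      cases v with
      | nil =>
        exact absurd (flatMap_nil_of h (x :: u₂) hu (by simpa using heq)) (by simp)
      | cons y v₂ =>
        by_cases hxy : x = y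
        · subst hxy
          rw [List.flatMap_cons, List.flatMap_cons] at heq
          have heq2 : u₂.flatMap h = v₂.flatMap h := List.append_cancel_left heq
          have hx1 : 0 < (h x).length := List.length_pos_iff.2 (hu x (by simp))
          have hlen2 : (u₂.flatMap h).length ≤ N := by
            rw [List.flatMap_cons, List.length_append] at hlen; omega
          have := IH h u₂ v₂ hlen2 (fun z hz => hu z (by simp [hz]))
            (fun z hz => hv z (by simp [hz])) hGood heq2
          rw [this]
        · -- main helper
          have main : ∀ (x y : Fin n) (u₂ v₂ : List (Fin n)), x ≠ y →
              (∀ z ∈ x :: u₂, h z ≠ []) → (∀ z ∈ y :: v₂, h z ≠ []) →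
              ((x :: u₂).flatMap h).length ≤ N + 1 →
              (x :: u₂).flatMap h = (y :: v₂).flatMap h →
              (h x).length ≤ (h y).length → False := by
            clear hxy hu hv hlen heq u₂ v₂ x y
            intro x y u₂ v₂ hxy hu hv hlen heq hle
            rw [List.flatMap_cons, List.flatMap_cons] at heq
            have hpx : h x <+: h y := by
              have h1 : h x <+: h y ++ v₂.flatMap h := heq ▸ ((h x).prefix_append _)
              exact List.prefix_of_prefix_length_le h1 ((h y).prefix_append _) hle
            obtain ⟨w, hw⟩ := hpx
            have hxne : h x ≠ [] := hu x (by simp)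
            have hyne : h y ≠ [] := hv y (by simp)
            have hwne : w ≠ [] := by
              intro h0
              subst h0
              rw [List.append_nil] at hw
              set d : Fin n → ℚ := fun j => if j = x then 1 else if j = y then -1 else 0 with hd
              have hsum : ∀ a : Δ, ∑ j, d j * (((h j).count a : ℚ)) = 0 := by
                intro a
                have expand : ∀ j, d j * (((h j).count a : ℚ)) =
                    (if j = x then ((h j).count a : ℚ) else 0)
                    + (if j = y then -((h j).count a : ℚ) else 0) := by
                  intro j
                  by_cases h1 : j = x
                  · subst h1; simp [hd, hxy]
                  · by_cases h2 : j = y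
                    · subst h2; simp [hd, h1]
                    · simp [hd, h1, h2]
                rw [Finset.sum_congr rfl fun j _ => expand j, Finset.sum_add_distrib,
                  Finset.sum_ite_eq', Finset.sum_ite_eq']
                simp [hw]
              have := hGood d hsum x hxne
              simp [hd] at this
            set g : Fin n → List Δ := Function.update h y w with hg
            have hgx : g x = h x := Function.update_of_ne hxy _ _
            have hgy : g y = w := Function.update_self _ _ _
            have hgo : ∀ z, z ≠ y → g z = h z := fun z hz => Function.update_of_ne hz _ _
            set τ : Fin n → List (Fin n) := fun z => if z = y then [x, y] else [z] with hτ
            have hτg : ∀ z, (τ z).flatMap g = h z := by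
              intro z
              by_cases hz : z = y
              · subst hz; simp [hτ, hgx, hgy, ← hw]
              · simp [hτ, hz, hgo z hz]
            have hcomp : ∀ l : List (Fin n), (l.flatMap τ).flatMap g = l.flatMap h := by
              intro l
              induction l with
              | nil => rfl
              | cons z t ih =>
                rw [List.flatMap_cons, List.flatMap_append, ih, hτg, List.flatMap_cons]
            have heq2 : u₂.flatMap h = w ++ v₂.flatMap h := by
              rw [← hw, List.append_assoc] at heq
              exact List.append_cancel_left heq
            have heq3 : (u₂.flatMap τ).flatMap g = (y :: v₂.flatMap τ).flatMap g := by
              rw [List.flatMap_cons, hcomp, hcomp, hgy, heq2]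
            have hlen2 : ((u₂.flatMap τ).flatMap g).length ≤ N := by
              rw [hcomp]
              have h1 : 0 < (h x).length := List.length_pos_iff.2 hxne
              rw [List.flatMap_cons, List.length_append] at hlen
              omega
            have mem_tau : ∀ (l : List (Fin n)), (∀ z ∈ l, h z ≠ []) →
                ∀ z ∈ l.flatMap τ, g z ≠ [] := by
              intro l hl z hz
              rw [List.mem_flatMap] at hz
              obtain ⟨t, ht, hzt⟩ := hz
              by_cases hty : t = y
              · subst hty
                simp only [hτ, if_pos rfl, if_true, eq_self_iff_true, List.mem_cons, List.mem_singleton] at hzt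
                rcases hzt with rfl | hzt
                · rw [hgx]; exact hxne
                · simp at hzt; subst hzt; rw [hgy]; exact hwne
              · simp only [hτ, if_neg hty, List.mem_singleton] at hzt
                subst hzt
                by_cases hzy : z = y
                · subst hzy; rw [hgy]; exact hwne
                · rw [hgo z hzy]; exact hl z ht
            have hGood' : ∀ d : Fin n → ℚ,
                (∀ a : Δ, ∑ j, d j * (((g j).count a : ℚ)) = 0) →
                ∀ j, g j ≠ [] → d j = 0 := by
              intro d hd
              set d' : Fin n → ℚ := fun j => if j = x then d x - d y else d j with hd'
              have hcount : ∀ a : Δ, ((h y).count a : ℚ) =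
                  ((h x).count a : ℚ) + ((w.count a : ℚ)) := by
                intro a; rw [← hw, List.count_append]; push_cast; ring
              have hsum : ∀ a : Δ, ∑ j, d' j * (((h j).count a : ℚ)) = 0 := by
                intro a
                have expand : ∀ j, d' j * (((h j).count a : ℚ)) =
                    d j * (((g j).count a : ℚ))
                    + (if j = x then (- d y) * ((h x).count a : ℚ) else 0)
                    + (if j = y then d y * ((h x).count a : ℚ) else 0) := by
                  intro j
                  by_cases h1 : j = x
                  · rw [h1, hgx]
                    simp only [hd', if_pos rfl, if_true, eq_self_iff_true, if_neg hxy]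
                    ring
                  · by_cases h2 : j = y
                    · rw [h2, hgy]
                      simp only [hd', if_neg (show y ≠ x from Ne.symm hxy), if_pos rfl, if_true, eq_self_iff_true]
                      rw [hcount a]; ring
                    · rw [hgo j h2]
                      simp only [hd', if_neg h1, if_neg h2]
                      ring
                rw [Finset.sum_congr rfl fun j _ => expand j, Finset.sum_add_distrib,
                  Finset.sum_add_distrib, hd a, Finset.sum_ite_eq', Finset.sum_ite_eq']
                simp
              have h0 := hGood d' hsum
              have hx0 : d' x = 0 := h0 x hxne
              have hy0 : d' y = 0 := h0 y hyne
              simp only [hd', if_pos rfl, if_true, eq_self_iff_true] at hx0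
              simp only [hd', if_neg (show y ≠ x from Ne.symm hxy)] at hy0
              intro j hgj
              by_cases h1 : j = x
              · rw [h1]; linarith
              · by_cases h2 : j = y
                · rw [h2]; exact hy0
                · have hj : h j ≠ [] := by rwa [hgo j h2] at hgj
                  have := h0 j hj
                  simpa [hd', h1] using this
            have hne1 : ∀ z ∈ u₂.flatMap τ, g z ≠ [] :=
              mem_tau u₂ (fun z hz => hu z (by simp [hz]))
            have hne2 : ∀ z ∈ y :: v₂.flatMap τ, g z ≠ [] := by
              intro z hz
              rcases List.mem_cons.mp hz with rfl | hz
              · rw [hgy]; exact hwne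
              · exact mem_tau v₂ (fun z hz => hv z (by simp [hz])) z hz
            have hfin := IH g (u₂.flatMap τ) (y :: v₂.flatMap τ) hlen2 hne1 hne2 hGood' heq3
            cases u₂ with
            | nil => simp at hfin
            | cons z u₃ =>
              rw [List.flatMap_cons] at hfin
              by_cases hz : z = y
              · rw [hz] at hfin
                simp only [hτ, if_pos rfl, if_true, eq_self_iff_true] at hfin
                have : x = y := by
                  have := congrArg (fun l => l.head?) hfin
                  simpa using this
                exact hxy this
              · simp only [hτ, if_neg hz] at hfin
                have : z = y := by
                  have := congrArg (fun l => l.head?) hfin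
                  simpa using this
                exact hz this
          rcases le_total (h x).length (h y).length with hle | hle
          · exact (main x y u₂ v₂ hxy hu hv hlen heq hle).elim
          · exact (main y x v₂ u₂ (Ne.symm hxy) hv hu (heq ▸ hlen) heq.symm hle).elim


/-- an erasing solution `h` of rank `n-1` of `E` erases exactly one
unknown `x`, the equation `δ_x(E)` is trivial, and `Γ_h = {u ∈ ℚⁿ : u x = 0}`. -/
theorem erasing_solution_rank {n : ℕ} {Δ : Type} [DecidableEq Δ]
    (h : Fin n → List Δ) (E : List (Fin n) × List (Fin n))
    (hsol : IsSolutionE h E) (hrank : morphRank h = n - 1)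
    (herase : ∃ x, h x = []) :
    ∃ x : Fin n, h x = [] ∧ (∀ y, h y = [] → y = x) ∧
      E.1.filter (fun z => z ≠ x) = E.2.filter (fun z => z ≠ x) ∧
      ∀ u : Fin n → ℚ, u ∈ GammaSpace h ↔ u x = 0 := by
  obtain ⟨x, hx⟩ := herase
  -- the kernel of the x-th coordinate projection
  have hsub : GammaSpace h ≤ LinearMap.ker (LinearMap.proj x : (Fin n → ℚ) →ₗ[ℚ] ℚ) := by
    rw [GammaSpace, Submodule.span_le]
    rintro _ ⟨a, rfl⟩
    simp [LinearMap.mem_ker, gamVec, hx]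
  have hsurj : Function.Surjective (LinearMap.proj x : (Fin n → ℚ) →ₗ[ℚ] ℚ) :=
    fun q => ⟨Pi.single x q, by simp⟩
  have hKrank :
      Module.finrank ℚ ↥(LinearMap.ker (LinearMap.proj x : (Fin n → ℚ) →ₗ[ℚ] ℚ)) = n - 1 := by
    have h1 := LinearMap.finrank_range_add_finrank_ker
      (LinearMap.proj x : (Fin n → ℚ) →ₗ[ℚ] ℚ)
    rw [LinearMap.range_eq_top.2 hsurj, finrank_top] at h1
    simp [Module.finrank_self, Module.finrank_pi] at h1
    omega
  have hEq : GammaSpace h = LinearMap.ker (LinearMap.proj x : (Fin n → ℚ) →ₗ[ℚ] ℚ) := by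
    apply Submodule.eq_of_le_of_finrank_le hsub
    rw [hKrank]
    rw [morphRank] at hrank
    omega
  have hiff : ∀ u : Fin n → ℚ, u ∈ GammaSpace h ↔ u x = 0 := by
    intro u
    rw [hEq, LinearMap.mem_ker, LinearMap.proj_apply]
  have huniq : ∀ y, h y = [] → y = x := by
    intro y hy
    by_contra hne
    have h1 : Pi.single y (1 : ℚ) ∈ GammaSpace h :=
      (hiff _).2 (Pi.single_eq_of_ne (fun e => hne e.symm) 1)
    have h2 : GammaSpace h ≤ LinearMap.ker (LinearMap.proj y : (Fin n → ℚ) →ₗ[ℚ] ℚ) := by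
      rw [GammaSpace, Submodule.span_le]
      rintro _ ⟨a, rfl⟩
      simp [LinearMap.mem_ker, gamVec, hy]
    have h3 := h2 h1
    rw [LinearMap.mem_ker, LinearMap.proj_apply, Pi.single_eq_same] at h3
    exact one_ne_zero h3
  have hGood : ∀ d : Fin n → ℚ, (∀ a : Δ, ∑ j, d j * (((h j).count a : ℚ)) = 0) →
      ∀ j, h j ≠ [] → d j = 0 := by
    intro d hd j hj
    have hjx : j ≠ x := fun e => hj (e ▸ hx)
    have hmem : Pi.single j (1 : ℚ) ∈ GammaSpace h :=
      (hiff _).2 (Pi.single_eq_of_ne (fun e => hjx e.symm) 1)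
    have ortho : ∀ u ∈ GammaSpace h, ∑ i, d i * u i = 0 := by
      intro u hu
      induction hu using Submodule.span_induction with
      | mem v hv => obtain ⟨a, rfl⟩ := hv; exact hd a
      | zero => simp
      | add v w' _ _ ihv ihw =>
        have : ∑ i, d i * (v + w') i = (∑ i, d i * v i) + ∑ i, d i * w' i := by
          rw [← Finset.sum_add_distrib]
          exact Finset.sum_congr rfl fun i _ => by simp [mul_add]
        rw [this, ihv, ihw, add_zero]
      | smul c v _ ihv =>
        have : ∑ i, d i * (c • v) i = c * ∑ i, d i * v i := by
          rw [Finset.mul_sum]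
          exact Finset.sum_congr rfl fun i _ => by simp [smul_eq_mul]; ring
        rw [this, ihv, mul_zero]
    have := ortho _ hmem
    rw [Finset.sum_eq_single j] at this
    · simpa using this
    · intro i _ hij
      simp [Pi.single_eq_of_ne hij]
    · simp
  have hfilter : ∀ l : List (Fin n), (l.filter (fun z => z ≠ x)).flatMap h = l.flatMap h := by
    intro l
    induction l with
    | nil => rfl
    | cons z t ih =>
      rw [List.filter_cons]
      by_cases hz : z = x
      · rw [if_neg (by simp [hz]), ih, List.flatMap_cons, hz, hx, List.nil_append]
      · rw [if_pos (by simp [hz]), List.flatMap_cons, List.flatMap_cons, ih]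
  have hne : ∀ l : List (Fin n), ∀ z ∈ l.filter (fun z => z ≠ x), h z ≠ [] := by
    intro l z hz
    have := List.of_mem_filter hz
    simp at this
    intro h0
    exact this (huniq z h0)
  have htriv : E.1.filter (fun z => z ≠ x) = E.2.filter (fun z => z ≠ x) := by
    apply key_lemma (((E.1.filter (fun z => z ≠ x)).flatMap h).length) h _ _ le_rfl
      (hne E.1) (hne E.2) hGood
    rw [hfilter, hfilter]
    exact hsol
  exact ⟨x, hx, huniq, htriv, hiff⟩


end WordEquations
end

section
/- For every pair of word equations E and E' in n unknowns and every pair of indices k < ℓ ≤ n, the polynomial t_{kℓ}^{E,E'} = S_{E,x_k}S_{E',x_ℓ} − S_{E',x_k}S_{E,x_ℓ} contains at most 2(|E|_{x_k} + |E|_{x_ℓ}) minimal monomials. -/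
open scoped BigOperators

namespace WordEquations

/-- `p`'s support can be covered by `N` chains. -/
def CoveredBy {n : ℕ} (p : MvPolynomial (Fin n) ℤ) (N : ℕ) : Prop :=
  ∃ C : Fin N → Set (Fin n →₀ ℕ),
    (∀ i, IsChain (· ≤ ·) (C i)) ∧ ∀ β ∈ p.support, ∃ i, β ∈ C i

lemma coveredBy_zero {n N : ℕ} : CoveredBy (0 : MvPolynomial (Fin n) ℤ) N :=
  ⟨fun _ => ∅, fun _ => IsChain.empty, by simp⟩

lemma CoveredBy.congr {n : ℕ} {p q : MvPolynomial (Fin n) ℤ} {N : ℕ}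
    (h : CoveredBy p N) (hpq : p = q) : CoveredBy q N := hpq ▸ h

lemma CoveredBy.mono {n : ℕ} {p : MvPolynomial (Fin n) ℤ} {N M : ℕ}
    (h : CoveredBy p N) (hNM : N ≤ M) : CoveredBy p M := by
  obtain ⟨C, hC, hcov⟩ := h
  refine ⟨fun i => if h : (i : ℕ) < N then C ⟨i, h⟩ else ∅, fun i => ?_, fun β hβ => ?_⟩
  · dsimp only; split
    · exact hC _
    · exact IsChain.empty
  · obtain ⟨i, hi⟩ := hcov β hβ
    exact ⟨⟨i, lt_of_lt_of_le i.2 hNM⟩, by simp [i.2, hi]⟩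

lemma CoveredBy.add {n : ℕ} {p q : MvPolynomial (Fin n) ℤ} {N M : ℕ}
    (hp : CoveredBy p N) (hq : CoveredBy q M) : CoveredBy (p + q) (N + M) := by
  classical
  obtain ⟨C, hC, hcov⟩ := hp
  obtain ⟨D, hD, hdov⟩ := hq
  refine ⟨fun i => Fin.addCases C D i, fun i => ?_, fun β hβ => ?_⟩
  · refine Fin.addCases (fun i => ?_) (fun i => ?_) i <;> simp [hC, hD]
  · have := MvPolynomial.support_add hβ
    rcases Finset.mem_union.1 this with h | h
    · obtain ⟨i, hi⟩ := hcov β h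
      exact ⟨Fin.castAdd M i, by simp [hi]⟩
    · obtain ⟨i, hi⟩ := hdov β h
      exact ⟨Fin.natAdd N i, by simp [hi]⟩

lemma CoveredBy.neg {n : ℕ} {p : MvPolynomial (Fin n) ℤ} {N : ℕ}
    (hp : CoveredBy p N) : CoveredBy (-p) N := by
  obtain ⟨C, hC, hcov⟩ := hp
  exact ⟨C, hC, fun β hβ => hcov β (by rwa [MvPolynomial.support_neg] at hβ)⟩

lemma CoveredBy.sub {n : ℕ} {p q : MvPolynomial (Fin n) ℤ} {N M : ℕ}
    (hp : CoveredBy p N) (hq : CoveredBy q M) : CoveredBy (p - q) (N + M) := by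
  rw [sub_eq_add_neg]; exact hp.add hq.neg

lemma CoveredBy.X_mul {n : ℕ} {q : MvPolynomial (Fin n) ℤ} {N : ℕ} (x : Fin n)
    (hq : CoveredBy q N) : CoveredBy (MvPolynomial.X x * q) N := by
  classical
  obtain ⟨C, hC, hcov⟩ := hq
  refine ⟨fun i => (Finsupp.single x 1 + ·) '' C i, fun i => ?_, fun β hβ => ?_⟩
  · rintro _ ⟨a, ha, rfl⟩ _ ⟨b, hb, rfl⟩ hne
    have hab : a ≠ b := fun h => hne (by rw [h])
    rcases hC i ha hb hab with h | h
    · exact Or.inl (add_le_add_right h _)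
    · exact Or.inr (add_le_add_right h _)
  · have := MvPolynomial.support_mul _ _ hβ
    rw [MvPolynomial.support_X] at this
    obtain ⟨a, ha, b, hb, hab⟩ := Finset.mem_add.1 this
    obtain ⟨i, hi⟩ := hcov b hb
    refine ⟨i, ⟨b, hi, ?_⟩⟩
    simp only [Finset.mem_singleton] at ha
    rw [← hab, ha]

lemma sideS_nil {n : ℕ} (j : Fin n) : sideS ([] : List (Fin n)) j = 0 := by
  simp [sideS]

lemma sideS_cons {n : ℕ} (x : Fin n) (w : List (Fin n)) (j : Fin n) :
    sideS (x :: w) j = (if x = j then 1 else 0) + MvPolynomial.X x * sideS w j := by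
  have h1 : sideS (x :: w) j = ∑ a : Fin (w.length + 1),
      if (x :: w).get a = j then (((x :: w).take (a : ℕ)).map MvPolynomial.X).prod else 0 := rfl
  rw [h1, sideS, Fin.sum_univ_succ]
  congr 1
  rw [Finset.mul_sum]
  refine Finset.sum_congr rfl fun a _ => ?_
  rw [mul_ite, mul_zero]
  simp [List.take_succ_cons]

lemma sideS_single_chain {n : ℕ} (w : List (Fin n)) (j : Fin n) :
    ∃ C : Set (Fin n →₀ ℕ), IsChain (· ≤ ·) C ∧ ∀ β ∈ (sideS w j).support, β ∈ C := by
  classical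
  induction w with
  | nil => exact ⟨∅, IsChain.empty, by simp [sideS_nil]⟩
  | cons x w ih =>
    obtain ⟨C, hC, hcov⟩ := ih
    refine ⟨insert 0 ((Finsupp.single x 1 + ·) '' C), ?_, fun β hβ => ?_⟩
    · rintro a (rfl | ⟨a', ha', rfl⟩) b hb hne
      · exact Or.inl zero_le
      · rcases hb with rfl | ⟨b', hb', rfl⟩
        · exact Or.inr zero_le
        · have hab : a' ≠ b' := fun h => hne (by rw [h])
          rcases hC ha' hb' hab with h | h
          · exact Or.inl (add_le_add_right h _)
          · exact Or.inr (add_le_add_right h _)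
    · rw [sideS_cons] at hβ
      have := MvPolynomial.support_add hβ
      rcases Finset.mem_union.1 this with h | h
      · left
        rcases eq_or_ne x j with hx | hx
        · rw [if_pos hx] at h
          have h0 : (0 : Fin n →₀ ℕ) = β := by
            exact (by simpa [MvPolynomial.mem_support_iff, MvPolynomial.coeff_one] using h : β = 0).symm
          simp [← h0]
        · simp [hx] at h
      · have := MvPolynomial.support_mul _ _ h
        rw [MvPolynomial.support_X] at this
        obtain ⟨a, ha, b, hb, hab⟩ := Finset.mem_add.1 this
        right
        refine ⟨b, hcov b hb, ?_⟩
        simp only [Finset.mem_singleton] at ha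
        rw [← hab, ha]


lemma coveredBy_sideS {n : ℕ} (w : List (Fin n)) (j : Fin n) : CoveredBy (sideS w j) 1 := by
  obtain ⟨C, hC, hcov⟩ := sideS_single_chain w j
  exact ⟨fun _ => C, fun _ => hC, fun β hβ => ⟨0, hcov β hβ⟩⟩

lemma coveredBy_SE {n : ℕ} (E : List (Fin n) × List (Fin n)) (j : Fin n) :
    CoveredBy (SE E j) 2 :=
  (coveredBy_sideS E.1 j).sub (coveredBy_sideS E.2 j)

lemma coveredBy_sideS_mul {n : ℕ} {q : MvPolynomial (Fin n) ℤ} {M : ℕ}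
    (w : List (Fin n)) (j : Fin n) (hq : CoveredBy q M) :
    CoveredBy (sideS w j * q) (w.count j * M) := by
  induction w with
  | nil => rw [sideS_nil, zero_mul]; exact coveredBy_zero
  | cons x w ih =>
    rcases eq_or_ne x j with hx | hx
    · have hs : sideS (x :: w) j * q = q + MvPolynomial.X x * (sideS w j * q) := by
        rw [sideS_cons, if_pos hx]; ring
      have h2 := hq.add (CoveredBy.X_mul x ih)
      have hcount : (x :: w).count j * M = M + w.count j * M := by
        simp [List.count_cons, hx]; ring
      rw [hs, hcount]; exact h2
    · have hs : sideS (x :: w) j * q = MvPolynomial.X x * (sideS w j * q) := by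
        rw [sideS_cons, if_neg hx]; ring
      have hcount : (x :: w).count j = w.count j := by
        simp [List.count_cons, hx]
      rw [hs, hcount]; exact CoveredBy.X_mul x ih

lemma card_minimalSupport_le {n : ℕ} {p : MvPolynomial (Fin n) ℤ} {N : ℕ}
    (h : CoveredBy p N) : (minimalSupport p).card ≤ N := by
  classical
  obtain ⟨C, hC, hcov⟩ := h
  rcases N with _ | N
  · have he : minimalSupport p = ∅ := by
      rw [Finset.eq_empty_iff_forall_notMem]
      intro β hβ
      have hs : β ∈ p.support := (Finset.mem_filter.1 hβ).1
      obtain ⟨i, _⟩ := hcov β hs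
      exact i.elim0
    simp [he]
  · set f : (Fin n →₀ ℕ) → Fin (N + 1) :=
      fun β => if h : ∃ i, β ∈ C i then h.choose else 0 with hf_def
    have hf : ∀ β ∈ minimalSupport p, β ∈ C (f β) := by
      intro β hβ
      have hex : ∃ i, β ∈ C i := hcov β (Finset.mem_filter.1 hβ).1
      simp only [hf_def, dif_pos hex]
      exact hex.choose_spec
    calc (minimalSupport p).card ≤ (Finset.univ : Finset (Fin (N + 1))).card := by
          apply Finset.card_le_card_of_injOn f (fun a _ => Finset.mem_univ _)
          intro β₁ h₁ β₂ h₂ hfe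
          rw [Finset.mem_coe] at h₁ h₂
          rcases eq_or_ne β₁ β₂ with heq | hne
          · exact heq
          · have hm₁ := Finset.mem_filter.1 h₁
            have hm₂ := Finset.mem_filter.1 h₂
            have hb₂ : β₂ ∈ C (f β₁) := hfe ▸ hf β₂ h₂
            rcases hC (f β₁) (hf β₁ h₁) hb₂ hne with hle | hle
            · exact hm₂.2 β₁ hm₁.1 hle
            · exact (hm₁.2 β₂ hm₂.1 hle).symm
      _ = N + 1 := by simp

/-- the determinant `t_{kℓ}^{E,E'}` has at most `2(|E|_{x_k} + |E|_{x_ℓ})`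
minimal monomials. -/
theorem minimal_monomials_det_le {n : ℕ} (E E' : List (Fin n) × List (Fin n))
    (k ℓ : Fin n) (hkl : k < ℓ) :
    (minimalSupport (SE E k * SE E' ℓ - SE E' k * SE E ℓ)).card ≤
      2 * ((E.1.count k + E.2.count k) + (E.1.count ℓ + E.2.count ℓ)) := by
  have h1 := coveredBy_sideS_mul E.1 k (coveredBy_SE E' ℓ)
  have h2 := coveredBy_sideS_mul E.2 k (coveredBy_SE E' ℓ)
  have h3 := coveredBy_sideS_mul E.1 ℓ (coveredBy_SE E' k)
  have h4 := coveredBy_sideS_mul E.2 ℓ (coveredBy_SE E' k)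
  have ht : (sideS E.1 k * SE E' ℓ - sideS E.2 k * SE E' ℓ) -
      (sideS E.1 ℓ * SE E' k - sideS E.2 ℓ * SE E' k) =
      SE E k * SE E' ℓ - SE E' k * SE E ℓ := by
    simp only [SE]; ring
  have hcov := ((h1.sub h2).sub (h3.sub h4)).congr ht
  have hle := card_minimalSupport_le hcov
  omega

end WordEquations
end
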